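/- Suppose the partial action (X,P,T) is directed. Then every finite subset S ⊆ P is contained in a finite action-directed subset F of P. -/
import Mathlib


/-- A (partial, right) action `(X, P, T)` of a monoid `P` on a set `X`:
domains `U m ⊆ X` and maps `x · m := act x m` (only meaningful on `U m`) such that
`U e = X`, `x · e = x`, `x ∈ U (m n) ↔ (x ∈ U m ∧ x·m ∈ U n)`, and in that case
`(x·m)·n = x·(m n)`. -/
structure PartialAction (P : Type*) [Monoid P] (X : Type*) where
  U : P → Set X
  act : X → P → X
  U_one : U 1 = Set.univ
  act_one : ∀ x : X, act x 1 = x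
  mem_U_mul : ∀ (x : X) (m n : P), x ∈ U (m * n) ↔ x ∈ U m ∧ act x m ∈ U n
  act_mul : ∀ (x : X) (m n : P), x ∈ U (m * n) → act (act x m) n = act x (m * n)

/-- `m ≤ n` in `P` iff `n = m·p` for some `p ∈ P`. -/
def pLe {P : Type*} [Monoid P] (m n : P) : Prop := ∃ p : P, n = m * p

/-- The partial action is directed: whenever `U m ∩ U n ≠ ∅` there is an upper bound
`r` of `m` and `n` with `U m ∩ U n = U r`. -/
def PartialAction.IsDirectedAction {P : Type*} [Monoid P] {X : Type*}
    (A : PartialAction P X) : Prop :=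
  ∀ m n : P, (A.U m ∩ A.U n).Nonempty →
    ∃ r : P, pLe m r ∧ pLe n r ∧ A.U m ∩ A.U n = A.U r

/-- A subset `F ⊆ P` is action-directed if `e ∈ F` and whenever `m, n ∈ F` with
`U m ∩ U n ≠ ∅` there is `r ∈ F` with `m ≤ r`, `n ≤ r` and `U r = U m ∩ U n`. -/
def PartialAction.ActionDirected {P : Type*} [Monoid P] {X : Type*}
    (A : PartialAction P X) (F : Set P) : Prop :=
  (1 : P) ∈ F ∧
  ∀ m ∈ F, ∀ n ∈ F, (A.U m ∩ A.U n).Nonempty →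
    ∃ r ∈ F, pLe m r ∧ pLe n r ∧ A.U r = A.U m ∩ A.U n

section Aux

variable {P : Type*} [Monoid P] {X : Type*}

lemma pLe_refl' (m : P) : pLe m m := ⟨1, (mul_one m).symm⟩

lemma pLe_trans' {a b c : P} (h1 : pLe a b) (h2 : pLe b c) : pLe a c := by
  obtain ⟨p, rfl⟩ := h1; obtain ⟨q, rfl⟩ := h2
  exact ⟨p * q, mul_assoc _ _ _⟩

def PartialAction.Imeet (A : PartialAction P X) (T : Finset P) : Set X :=
  ⋂ t ∈ T, A.U t

variable (A : PartialAction P X)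

lemma Imeet_empty : A.Imeet ∅ = Set.univ := by simp [PartialAction.Imeet]

lemma Imeet_singleton (a : P) : A.Imeet {a} = A.U a := by simp [PartialAction.Imeet]

lemma Imeet_insert [DecidableEq P] (a : P) (T : Finset P) :
    A.Imeet (insert a T) = A.U a ∩ A.Imeet T := by
  simp [PartialAction.Imeet, Finset.set_biInter_insert]

lemma Imeet_union (T₁ T₂ : Finset P) [DecidableEq P] :
    A.Imeet (T₁ ∪ T₂) = A.Imeet T₁ ∩ A.Imeet T₂ := by
  apply Set.ext; intro x; simp [PartialAction.Imeet, or_imp, forall_and]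

lemma Imeet_mono {T₁ T₂ : Finset P} (h : T₁ ⊆ T₂) : A.Imeet T₂ ⊆ A.Imeet T₁ := by
  intro x hx
  simp only [PartialAction.Imeet, Set.mem_iInter] at *
  exact fun t ht => hx t (h ht)

end Aux

section Main

variable {P : Type*} [Monoid P] {X : Type*} {A : PartialAction P X}
  (hdir : A.IsDirectedAction)
include hdir

/-- There is an element whose domain is a given nonempty finite meet,
dominating all elements of `T`. -/
lemma baseExists' (T : Finset P) (hne : (A.Imeet T).Nonempty) :
    ∃ b : P, A.U b = A.Imeet T ∧ ∀ t ∈ T, pLe t b := by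
  classical
  induction T using Finset.induction_on with
  | empty => exact ⟨1, by rw [A.U_one, Imeet_empty], by simp⟩
  | @insert a T ha ih =>
      rw [Imeet_insert] at hne ⊢
      obtain ⟨b₀, hb₀U, hb₀⟩ := ih (hne.mono Set.inter_subset_right)
      obtain ⟨r, har, hbr, hrU⟩ := hdir a b₀ (by rw [hb₀U]; exact hne)
      refine ⟨r, by rw [← hrU, hb₀U], ?_⟩
      intro t ht
      rcases Finset.mem_insert.1 ht with rfl | ht
      · exact har
      · exact pLe_trans' (hb₀ t ht) hbr

/-- Chaining: given `b` with `U b = V` and finitely many elements whose domains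
contain `V`, there is `r` with `U r = V` dominating `b` and all of them. -/
lemma chainAll' (L : Finset P) (b : P) (V : Set X) (hV : V.Nonempty)
    (hb : A.U b = V) (hL : ∀ x ∈ L, V ⊆ A.U x) :
    ∃ r : P, A.U r = V ∧ pLe b r ∧ ∀ x ∈ L, pLe x r := by
  classical
  induction L using Finset.induction_on with
  | empty => exact ⟨b, hb, pLe_refl' b, by simp⟩
  | @insert x L hx ih =>
      obtain ⟨r₀, hr₀U, hbr₀, hr₀⟩ := ih fun y hy => hL y (Finset.mem_insert_of_mem hy)
      have hxV : V ⊆ A.U x := hL x (Finset.mem_insert_self x L)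
      have hmeet : A.U r₀ ∩ A.U x = V := by
        rw [hr₀U]; exact Set.inter_eq_left.2 hxV
      obtain ⟨r, hr₀r, hxr, hrU⟩ := hdir r₀ x (by rw [hmeet]; exact hV)
      refine ⟨r, by rw [← hrU, hmeet], pLe_trans' hbr₀ hr₀r, ?_⟩
      intro y hy
      rcases Finset.mem_insert.1 hy with rfl | hy
      · exact hxr
      · exact pLe_trans' (hr₀ y hy) hr₀r

end Main

lemma famExists' {P : Type*} [Monoid P] {X : Type*} {A : PartialAction P X}
    (hdir : A.IsDirectedAction) (𝒞 : Finset (Finset P)) :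
    (∀ T ∈ 𝒞, ∀ T' ⊆ T, T' ∈ 𝒞) →
    ∃ f : Finset P → P, ∀ T ∈ 𝒞, (A.Imeet T).Nonempty →
      A.U (f T) = A.Imeet T ∧ (∀ t ∈ T, pLe t (f T)) ∧
      ∀ T' ⊆ T, pLe (f T') (f T) := by
  classical
  induction 𝒞 using Finset.strongInduction with
  | _ 𝒞 ih =>
  intro hdc
  rcases Finset.eq_empty_or_nonempty 𝒞 with rfl | h𝒞
  · exact ⟨fun _ => 1, by simp⟩
  obtain ⟨T0, hT0, hmax⟩ := Finset.exists_max_image 𝒞 Finset.card h𝒞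
  have hnot : ∀ T ∈ 𝒞, T0 ⊆ T → T = T0 := fun T hT hsub =>
    (Finset.eq_of_subset_of_card_le hsub (hmax T hT)).symm
  set 𝒞' : Finset (Finset P) := 𝒞.erase T0 with h𝒞'def
  have h𝒞'ss : 𝒞' ⊂ 𝒞 := Finset.erase_ssubset hT0
  have hdc' : ∀ T ∈ 𝒞', ∀ T' ⊆ T, T' ∈ 𝒞' := by
    intro T hT T' hT'
    have hT𝒞 := Finset.mem_of_mem_erase hT
    refine Finset.mem_erase.2 ⟨?_, hdc T hT𝒞 T' hT'⟩
    intro h; subst h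
    exact (Finset.mem_erase.1 hT).1 (hnot T hT𝒞 hT')
  obtain ⟨f', hf'⟩ := ih 𝒞' h𝒞'ss hdc'
  set L : Finset P := (𝒞'.filter (· ⊆ T0)).image f' with hLdef
  have hr : ∃ r : P, (A.Imeet T0).Nonempty →
      (A.U r = A.Imeet T0 ∧ (∀ t ∈ T0, pLe t r) ∧ ∀ x ∈ L, pLe x r) := by
    by_cases hne : (A.Imeet T0).Nonempty
    · obtain ⟨b, hbU, hb⟩ := baseExists' hdir T0 hne
      have hLcov : ∀ x ∈ L, A.Imeet T0 ⊆ A.U x := by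
        intro x hx
        obtain ⟨T', hT', rfl⟩ := Finset.mem_image.1 hx
        obtain ⟨hT'mem, hT'sub⟩ := Finset.mem_filter.1 hT'
        have hne' : (A.Imeet T').Nonempty := hne.mono (Imeet_mono A hT'sub)
        obtain ⟨hU', _, _⟩ := hf' T' hT'mem hne'
        rw [hU']; exact Imeet_mono A hT'sub
      obtain ⟨r, hrU, hbr, hrL⟩ := chainAll' hdir L b _ hne hbU hLcov
      exact ⟨r, fun _ => ⟨hrU, fun t ht => pLe_trans' (hb t ht) hbr, hrL⟩⟩
    · exact ⟨1, fun h => absurd h hne⟩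
  obtain ⟨r, hr⟩ := hr
  refine ⟨Function.update f' T0 r, ?_⟩
  intro T hT hTne
  by_cases hTT : T = T0
  · subst hTT
    obtain ⟨h1, h2, h3⟩ := hr hTne
    rw [Function.update_self]
    refine ⟨h1, h2, ?_⟩
    intro T' hT'
    by_cases h' : T' = T
    · subst h'; rw [Function.update_self]; exact pLe_refl' r
    · rw [Function.update_of_ne h']
      refine h3 _ (Finset.mem_image_of_mem f' ?_)
      exact Finset.mem_filter.2 ⟨Finset.mem_erase.2 ⟨h', hdc T hT T' hT'⟩, hT'⟩
  · have hTmem : T ∈ 𝒞' := Finset.mem_erase.2 ⟨hTT, hT⟩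
    obtain ⟨h1, h2, h3⟩ := hf' T hTmem hTne
    rw [Function.update_of_ne hTT]
    refine ⟨h1, h2, ?_⟩
    intro T'' hT''
    have hne'' : T'' ≠ T0 := by
      intro h; subst h; exact hTT (hnot T hT hT'')
    rw [Function.update_of_ne hne'']
    exact h3 T'' hT''

theorem stmt8' {P : Type*} [Monoid P] {X : Type*} (A : PartialAction P X)
    (hdir : A.IsDirectedAction) (S : Finset P) :
    ∃ F : Finset P, S ⊆ F ∧ (((1 : P) ∈ (F : Set P)) ∧
      ∀ m ∈ (F : Set P), ∀ n ∈ (F : Set P), (A.U m ∩ A.U n).Nonempty →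
        ∃ r ∈ (F : Set P), pLe m r ∧ pLe n r ∧ A.U r = A.U m ∩ A.U n) := by
  classical
  obtain ⟨f, hf⟩ := famExists' hdir S.powerset (by
    intro T hT T' hT'
    exact Finset.mem_powerset.2 (hT'.trans (Finset.mem_powerset.1 hT)))
  set G : Finset P := (S.powerset.filter fun T => (A.Imeet T).Nonempty).image f with hG
  refine ⟨insert 1 (S ∪ G), ?_, ?_, ?_⟩
  · intro s hs
    exact Finset.mem_insert_of_mem (Finset.mem_union_left _ hs)
  · simp
  · have key : ∀ m ∈ S ∪ G, ∃ Tm, Tm ⊆ S ∧ A.U m = A.Imeet Tm ∧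
        ∀ T, Tm ⊆ T → T ⊆ S → (A.Imeet T).Nonempty → pLe m (f T) := by
      intro m hm
      rcases Finset.mem_union.1 hm with hm | hm
      · refine ⟨{m}, Finset.singleton_subset_iff.2 hm, (Imeet_singleton A m).symm, ?_⟩
        intro T hsub hTS hTne
        exact (hf T (Finset.mem_powerset.2 hTS) hTne).2.1 m
          (hsub (Finset.mem_singleton_self m))
      · obtain ⟨T₀, hT₀, rfl⟩ := Finset.mem_image.1 hm
        obtain ⟨hT₀S, hT₀ne⟩ := Finset.mem_filter.1 hT₀
        refine ⟨T₀, Finset.mem_powerset.1 hT₀S, (hf T₀ hT₀S hT₀ne).1, ?_⟩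
        intro T hsub hTS hTne
        exact (hf T (Finset.mem_powerset.2 hTS) hTne).2.2 T₀ hsub
    intro m hm n hn hmn
    rw [Finset.mem_coe, Finset.mem_insert] at hm hn
    rcases hm with rfl | hm
    · have hn' : n ∈ insert 1 (S ∪ G) := Finset.mem_insert.2 hn
      refine ⟨n, hn', ⟨n, (one_mul n).symm⟩, pLe_refl' n, ?_⟩
      rw [A.U_one, Set.univ_inter]
    rcases hn with rfl | hn
    · refine ⟨m, Finset.mem_insert_of_mem hm, pLe_refl' m, ⟨m, (one_mul m).symm⟩, ?_⟩
      rw [A.U_one, Set.inter_univ]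
    obtain ⟨Tm, hTmS, hmU, hmLe⟩ := key m hm
    obtain ⟨Tn, hTnS, hnU, hnLe⟩ := key n hn
    have hIT : A.Imeet (Tm ∪ Tn) = A.U m ∩ A.U n := by
      rw [Imeet_union, ← hmU, ← hnU]
    have hTne : (A.Imeet (Tm ∪ Tn)).Nonempty := by rw [hIT]; exact hmn
    have hTS : Tm ∪ Tn ⊆ S := Finset.union_subset hTmS hTnS
    have hmemG : f (Tm ∪ Tn) ∈ G := by
      rw [hG]
      exact Finset.mem_image_of_mem f
        (Finset.mem_filter.2 ⟨Finset.mem_powerset.2 hTS, hTne⟩)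
    refine ⟨f (Tm ∪ Tn),
      Finset.mem_insert_of_mem (Finset.mem_union_right _ hmemG),
      hmLe _ Finset.subset_union_left hTS hTne,
      hnLe _ Finset.subset_union_right hTS hTne, ?_⟩
    rw [(hf _ (Finset.mem_powerset.2 hTS) hTne).1, hIT]

/-- if the partial action `(X,P,T)` is directed, then every finite
`S ⊆ P` is contained in a finite action-directed subset `F ⊆ P`. -/
theorem stmt8 {P : Type*} [Monoid P] {X : Type*} (A : PartialAction P X)
    (hdir : A.IsDirectedAction) (S : Finset P) :
    ∃ F : Finset P, S ⊆ F ∧ A.ActionDirected (F : Set P) := by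
  obtain ⟨F, h1, h2, h3⟩ := stmt8' A hdir S
  exact ⟨F, h1, h2, h3⟩
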